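/- For every condition s ∈ R, every p₀ ∈ Aₛ, and every q₀ ∈ Col, there exist a condition r ∈ R with r ≤_R s, an element p ∈ Aᵣ, and a function q ∈ Col(Aᵣ) such that q ⊇ q₀, p <ᵣ p₀, and (p,q) ∈ Bᵣ. -/

import Mathlib

open Cardinal Set

noncomputable section

/-- A partial function from ordinals to ordinals, represented by its graph. -/
abbrev ColFun := Set (Ordinal × Ordinal)

/-- `q ∈ Col(X)`: `q` is (the graph of) a function whose domain is an ordinal `< ω₁`
and whose range is a subset of `X`. -/
def IsColFun (X : Set Ordinal) (q : ColFun) : Prop :=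
  (∀ a b b', (a, b) ∈ q → (a, b') ∈ q → b = b') ∧
  (∃ δ : Ordinal, δ < (aleph 1).ord ∧ ∀ a : Ordinal, (∃ b, (a, b) ∈ q) ↔ a < δ) ∧
  (∀ a b, (a, b) ∈ q → b ∈ X)

/-- A quadruple `((A, <), B, C, F)`; `F` is a partial function represented by its graph. -/
structure Quad where
  A : Set Ordinal
  lt : Ordinal → Ordinal → Prop
  B : Set (Ordinal × ColFun)
  C : Set (ℕ → Ordinal)
  F : Set ((ℕ → Ordinal) × (Ordinal × ColFun) × ℕ)

namespace Quad

/-- `x ≤ᵣ y`. -/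
def leR (r : Quad) (x y : Ordinal) : Prop := r.lt x y ∨ x = y

/-- `x ⊥ᵣ y`: no `z ∈ Aᵣ` with `z ≤ᵣ x` and `z ≤ᵣ y`. -/
def Incomp (r : Quad) (x y : Ordinal) : Prop := ¬ ∃ z ∈ r.A, r.leR z x ∧ r.leR z y

/-- `r` is a forcing condition. -/
def IsCond (r : Quad) : Prop :=
  -- (1) A is a countable set of ordinals < ω₂
  r.A.Countable ∧
  (∀ a ∈ r.A, a < (aleph 2).ord) ∧
  -- (2) <ᵣ is a strict partial order on A
  (∀ a b, r.lt a b → a ∈ r.A ∧ b ∈ r.A) ∧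
  (∀ a b c, r.lt a b → r.lt b c → r.lt a c) ∧
  -- (3) b <ᵣ a implies a < b (whence <ᵣ is irreflexive and asymmetric)
  (∀ a b, r.lt b a → a < b) ∧
  -- (4) B is a countable subset of A × Col(A) with p ∈ range q for (p,q) ∈ B
  r.B.Countable ∧
  (∀ pq ∈ r.B, pq.1 ∈ r.A ∧ IsColFun r.A pq.2 ∧ ∃ α, (α, pq.1) ∈ pq.2) ∧
  -- (5) C is a countable set of <ᵣ-descending sequences in A without lower bound
  r.C.Countable ∧
  (∀ a ∈ r.C, (∀ n, a n ∈ r.A) ∧ (∀ n, r.lt (a (n + 1)) (a n)) ∧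
    ¬ ∃ z ∈ r.A, ∀ n, r.leR z (a n)) ∧
  -- (6) F is a (partial) function whose domain consists exactly of the pairs
  -- (⟨aₙ⟩, (p,q)) with ⟨aₙ⟩ ∈ C, (p,q) ∈ B, p ≥ a₀, satisfying (*)
  (∀ x ∈ r.F, x.1 ∈ r.C ∧ x.2.1 ∈ r.B ∧ x.1 0 ≤ x.2.1.1) ∧
  (∀ a pq, a ∈ r.C → pq ∈ r.B → a 0 ≤ pq.1 → ∃! m : ℕ, (a, pq, m) ∈ r.F) ∧
  (∀ a pq m, (a, pq, m) ∈ r.F →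
    ∀ p'q' ∈ r.B, r.leR p'q'.1 pq.1 → pq.2 ⊆ p'q'.2 →
      r.lt p'q'.1 (a m) → ∃ k, r.Incomp p'q'.1 (a k))

/-- `Ext r s`: `r ≤_R s`, i.e. `r` is stronger than `s`. -/
def Ext (r s : Quad) : Prop :=
  s.A ⊆ r.A ∧
  (∀ a ∈ s.A, ∀ b ∈ s.A, (r.lt a b ↔ s.lt a b)) ∧
  (∀ a ∈ s.A, ∀ b ∈ s.A, (r.Incomp a b ↔ s.Incomp a b)) ∧
  s.B ⊆ r.B ∧ s.C ⊆ r.C ∧ s.F ⊆ r.F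

end Quad

open Quad in
/-- Density of `Q` in `P × Col`: below any `p₀ ∈ Aₛ` and `q₀ ∈ Col` one can find a
stronger condition `r` and a pair `(p,q) ∈ Bᵣ` with `q ⊇ q₀` and `p <ᵣ p₀`. -/
theorem stmt3 (s : Quad) (hs : s.IsCond) (p₀ : Ordinal) (hp₀ : p₀ ∈ s.A)
    (q₀ : ColFun) (hq₀ : IsColFun {α : Ordinal | α < (aleph 2).ord} q₀) :
    ∃ r : Quad, r.IsCond ∧ Ext r s ∧ ∃ p ∈ r.A, ∃ q : ColFun,
      IsColFun r.A q ∧ q₀ ⊆ q ∧ r.lt p p₀ ∧ (p, q) ∈ r.B := by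
  classical
  obtain ⟨hAcnt, hAlt, hltmem, hlttrans, hltord, hBcnt, hB, hCcnt, hC, hFdom, hFuniq, hFstar⟩ := hs
  obtain ⟨hq0fun, ⟨δ₀, hδ₀, hδ₀dom⟩, hq0rng⟩ := hq₀
  -- enumerate s.A and choose p above it
  obtain ⟨f, hf⟩ := hAcnt.exists_eq_range ⟨p₀, hp₀⟩
  have hreg : (aleph 2).IsRegular := by
    have h := Cardinal.isRegular_aleph_succ (1 : Ordinal)
    have : Order.succ (1 : Ordinal) = 2 := by simp [one_add_one_eq_two]
    rwa [this] at h
  have hfA : ∀ n, f n ∈ s.A := by intro n; rw [hf]; exact Set.mem_range_self n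
  have hsup : (⨆ n, f n) < (aleph 2).ord := by
    apply Cardinal.iSup_lt_ord_lift_of_isRegular hreg
    · rw [Cardinal.mk_nat, Cardinal.lift_aleph0, ← Cardinal.aleph_zero]
      exact Cardinal.aleph_lt_aleph.mpr (by norm_num)
    · exact fun n => hAlt (f n) (hfA n)
  set p : Ordinal := (⨆ n, f n) + 1 with hp_def
  have hplim : p < (aleph 2).ord := by
    rw [hp_def, Ordinal.add_one_eq_succ]
    exact (Cardinal.isSuccLimit_ord (Cardinal.aleph0_le_aleph 2)).succ_lt hsup
  have hpgt : ∀ b ∈ s.A, b < p := by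
    intro b hb
    rw [hf] at hb
    obtain ⟨n, rfl⟩ := hb
    have h1 : f n ≤ ⨆ n, f n := Ordinal.le_iSup f n
    have h2 : (⨆ n, f n) < p := by
      rw [hp_def, Ordinal.add_one_eq_succ]; exact Order.lt_succ _
    exact lt_of_le_of_lt h1 h2
  have hpnA : p ∉ s.A := fun h => lt_irrefl p (hpgt p h)
  -- the new quadruple
  set RA : Set Ordinal := s.A ∪ {p} ∪ {b | ∃ a, (a, b) ∈ q₀} with hRA
  set rlt : Ordinal → Ordinal → Prop :=
    fun a b => s.lt a b ∨ (a = p ∧ b ∈ s.A ∧ s.leR p₀ b) with hrltdef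
  set q : ColFun := insert (δ₀, p) q₀ with hqdef
  set BR : Set (Ordinal × ColFun) := insert (p, q) s.B with hBRdef
  set FR : Set ((ℕ → Ordinal) × (Ordinal × ColFun) × ℕ) :=
    s.F ∪ {x | ∃ a ∈ s.C, a 0 ≤ p ∧ x = (a, (p, q), 0)} with hFRdef
  set r : Quad := ⟨RA, rlt, BR, s.C, FR⟩ with hrdef
  have hAsub : s.A ⊆ RA := fun x hx => Or.inl (Or.inl hx)
  have hpRA : p ∈ RA := Or.inl (Or.inr rfl)
  have hqp : (δ₀, p) ∈ q := Set.mem_insert _ _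
  -- basic facts about rlt
  have hlt_iff : ∀ a b, a ∈ s.A → (rlt a b ↔ s.lt a b) := by
    intro a b ha
    constructor
    · rintro (h | ⟨rfl, -, -⟩)
      · exact h
      · exact absurd ha hpnA
    · exact Or.inl
  have hleR_iff : ∀ a b, a ∈ s.A → (r.leR a b ↔ s.leR a b) := by
    intro a b ha
    show rlt a b ∨ a = b ↔ s.lt a b ∨ a = b
    rw [hlt_iff a b ha]
  have hqnsub : ∀ pq ∈ s.B, ¬ q ⊆ pq.2 := by
    intro pq hpq hsub
    exact hpnA ((hB pq hpq).2.1.2.2 δ₀ p (hsub hqp))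
  have hpqB : (p, q) ∉ s.B := fun h => hqnsub _ h (le_refl q)
  have hleRp : ∀ z, r.leR z p → z = p := by
    rintro z ((h | ⟨rfl, hpA, -⟩) | rfl)
    · exact absurd (hltmem _ _ h).2 hpnA
    · exact rfl
    · rfl
  have hIncomp_p : ∀ x, ¬ r.leR p x → r.Incomp p x := by
    rintro x hx ⟨z, -, hzp, hzx⟩
    rw [hleRp z hzp] at hzx
    exact hx hzx
  have hkey : ∀ a ∈ s.C, ∃ k, r.Incomp p (a k) := by
    intro a ha
    by_contra hcon
    push_neg at hcon
    have hall : ∀ k, s.leR p₀ (a k) := by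
      intro k
      have hk : r.leR p (a k) := by
        by_contra hk
        exact hcon k (hIncomp_p _ hk)
      rcases hk with (h | ⟨-, -, h⟩) | h
      · exact absurd (hltmem _ _ h).1 hpnA
      · exact h
      · exact absurd ((hC a ha).1 k) (h ▸ hpnA)
    exact (hC a ha).2.2 ⟨p₀, hp₀, hall⟩
  have hIncomp_iff : ∀ a ∈ s.A, ∀ b ∈ s.A, (r.Incomp a b ↔ s.Incomp a b) := by
    intro a ha b hb
    constructor
    · rintro h ⟨z, hz, hza, hzb⟩
      exact h ⟨z, hAsub hz, (hleR_iff z a hz).mpr hza, (hleR_iff z b hz).mpr hzb⟩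
    · rintro h ⟨z, hz, hza, hzb⟩
      by_cases hzA : z ∈ s.A
      · exact h ⟨z, hzA, (hleR_iff z a hzA).mp hza, (hleR_iff z b hzA).mp hzb⟩
      · have hza' : s.leR p₀ a := by
          rcases hza with (h' | ⟨-, -, h'⟩) | rfl
          · exact absurd (hltmem _ _ h').1 hzA
          · exact h'
          · exact absurd ha hzA
        have hzb' : s.leR p₀ b := by
          rcases hzb with (h' | ⟨-, -, h'⟩) | rfl
          · exact absurd (hltmem _ _ h').1 hzA
          · exact h'
          · exact absurd hb hzA
        exact h ⟨p₀, hp₀, hza', hzb'⟩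
  -- q is a Col(RA) function
  have hColq : IsColFun RA q := by
    refine ⟨?_, ⟨δ₀ + 1, ?_, ?_⟩, ?_⟩
    · rintro a b b' (hb | hb) (hb' | hb')
      · rw [(Prod.mk.injEq .. ).mp hb |>.2, (Prod.mk.injEq ..).mp hb' |>.2]
      · obtain ⟨ha1, -⟩ := (Prod.mk.injEq ..).mp hb
        rw [ha1] at hb'
        exact absurd ((hδ₀dom δ₀).mp ⟨b', hb'⟩) (lt_irrefl δ₀)
      · obtain ⟨ha1, -⟩ := (Prod.mk.injEq ..).mp hb'
        rw [ha1] at hb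
        exact absurd ((hδ₀dom δ₀).mp ⟨b, hb⟩) (lt_irrefl δ₀)
      · exact hq0fun a b b' hb hb'
    · rw [Ordinal.add_one_eq_succ]
      exact (Cardinal.isSuccLimit_ord (Cardinal.aleph0_le_aleph 1)).succ_lt hδ₀
    · intro a
      constructor
      · rintro ⟨b, hb | hb⟩
        · obtain ⟨rfl, -⟩ := (Prod.mk.injEq ..).mp hb
          rw [Ordinal.add_one_eq_succ]; exact Order.lt_succ _
        · exact lt_trans ((hδ₀dom a).mp ⟨b, hb⟩)
            (by rw [Ordinal.add_one_eq_succ]; exact Order.lt_succ _)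
      · intro haδ
        rw [Ordinal.add_one_eq_succ, Order.lt_succ_iff] at haδ
        rcases lt_or_eq_of_le haδ with h | rfl
        · obtain ⟨b, hb⟩ := (hδ₀dom a).mpr h
          exact ⟨b, Or.inr hb⟩
        · exact ⟨p, Or.inl rfl⟩
    · rintro a b (hb | hb)
      · obtain ⟨-, rfl⟩ := (Prod.mk.injEq ..).mp hb
        exact hpRA
      · exact Or.inr ⟨a, hb⟩
  -- countability of the range of q₀
  have hIio : (Set.Iio δ₀).Countable := by
    rw [Cardinal.countable_iff_lt_aleph_one, Ordinal.mk_Iio_ordinal]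
    have h1 : δ₀.card < aleph 1 := Cardinal.lt_ord.mp hδ₀
    have h2 := Cardinal.lift_lt.mpr h1
    rwa [Cardinal.lift_aleph, Ordinal.lift_one] at h2
  have hrngcnt : {b | ∃ a, (a, b) ∈ q₀}.Countable := by
    set g : Ordinal → Ordinal :=
      fun a => if h : ∃ b, (a, b) ∈ q₀ then h.choose else 0 with hg
    refine (hIio.image g).mono ?_
    rintro b ⟨a, hab⟩
    refine ⟨a, (hδ₀dom a).mp ⟨b, hab⟩, ?_⟩
    have hex : ∃ b, (a, b) ∈ q₀ := ⟨b, hab⟩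
    rw [hg]
    simp only [dif_pos hex]
    exact hq0fun a _ b hex.choose_spec hab
  have hRAcnt : RA.Countable :=
    ((hAcnt.union (Set.countable_singleton p)).union hrngcnt)
  have hRAlt : ∀ a ∈ RA, a < (aleph 2).ord := by
    rintro a ((ha | rfl) | ⟨c, hc⟩)
    · exact hAlt a ha
    · exact hplim
    · exact hq0rng c a hc
  -- r is a condition
  have hrcond : r.IsCond := by
    refine ⟨hRAcnt, hRAlt, ?_, ?_, ?_, hBcnt.insert _, ?_, hCcnt, ?_, ?_, ?_, ?_⟩
    · rintro a b ((h | ⟨rfl, hbA, -⟩))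
      · exact ⟨hAsub (hltmem _ _ h).1, hAsub (hltmem _ _ h).2⟩
      · exact ⟨hpRA, hAsub hbA⟩
    · rintro a b c ((hab | ⟨rfl, hbA, hpb⟩)) ((hbc | ⟨rfl, hcA, hpc⟩))
      · exact Or.inl (hlttrans a b c hab hbc)
      · exact absurd (hltmem _ _ hab).2 hpnA
      · refine Or.inr ⟨rfl, (hltmem _ _ hbc).2, ?_⟩
        rcases hpb with h | rfl
        · exact Or.inl (hlttrans _ _ _ h hbc)
        · exact Or.inl hbc
      · exact absurd hbA hpnA
    · rintro a b ((h | ⟨rfl, hbA, -⟩))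
      · exact hltord a b h
      · exact hpgt _ hbA
    · rintro pq (rfl | hpq)
      · exact ⟨hpRA, hColq, δ₀, hqp⟩
      · obtain ⟨h1, ⟨h2a, h2b, h2c⟩, h3⟩ := hB pq hpq
        exact ⟨hAsub h1, ⟨h2a, h2b, fun a b hab => hAsub (h2c a b hab)⟩, h3⟩
    · intro a ha
      refine ⟨fun n => hAsub ((hC a ha).1 n), fun n => Or.inl ((hC a ha).2.1 n), ?_⟩
      rintro ⟨z, -, hz⟩
      by_cases hzA : z ∈ s.A
      · exact (hC a ha).2.2 ⟨z, hzA, fun n => (hleR_iff z (a n) hzA).mp (hz n)⟩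
      · have hall : ∀ n, s.leR p₀ (a n) := by
          intro n
          rcases hz n with (h' | ⟨-, -, h'⟩) | h'
          · exact absurd (hltmem _ _ h').1 hzA
          · exact h'
          · exact absurd (h' ▸ (hC a ha).1 n) hzA
        exact (hC a ha).2.2 ⟨p₀, hp₀, hall⟩
    · rintro x (hx | ⟨a, ha, h0, rfl⟩)
      · exact ⟨(hFdom x hx).1, Or.inr (hFdom x hx).2.1, (hFdom x hx).2.2⟩
      · exact ⟨ha, Or.inl rfl, h0⟩
    · rintro a pq ha (rfl | hpq) h0
      · refine ⟨0, Or.inr ⟨a, ha, h0, rfl⟩, ?_⟩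
        rintro m (hm | ⟨a', -, -, hm⟩)
        · exact absurd (hFdom _ hm).2.1 hpqB
        · exact ((Prod.mk.injEq ..).mp ((Prod.mk.injEq ..).mp hm).2).2
      · obtain ⟨m, hm, hmu⟩ := hFuniq a pq ha hpq h0
        refine ⟨m, Or.inl hm, ?_⟩
        rintro m' (hm' | ⟨a', -, -, hm'⟩)
        · exact hmu m' hm'
        · have hpq2 : pq = (p, q) :=
            ((Prod.mk.injEq ..).mp ((Prod.mk.injEq ..).mp hm').2).1
          exact absurd (hpq2 ▸ hpq) hpqB
    · rintro a pq m (hmem | ⟨a', ha', -, heq⟩) p'q' hp' hle hsub hlt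
      · -- old triple
        have hdom := hFdom _ hmem
        rcases hp' with rfl | hp'B
        · -- p'q' = (p, q)
          obtain ⟨k, hk⟩ := hkey a hdom.1
          exact ⟨k, hk⟩
        · -- p'q' ∈ s.B
          have hp1A : p'q'.1 ∈ s.A := (hB _ hp'B).1
          have hle' : s.leR p'q'.1 pq.1 := (hleR_iff _ _ hp1A).mp hle
          have hlt' : s.lt p'q'.1 (a m) := (hlt_iff _ _ hp1A).mp hlt
          obtain ⟨k, hk⟩ := hFstar a pq m hmem p'q' hp'B hle' hsub hlt'
          refine ⟨k, (hIncomp_iff _ hp1A _ ((hC a hdom.1).1 k)).mpr hk⟩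
      · -- new triple
        obtain ⟨rfl, h2⟩ := (Prod.mk.injEq ..).mp heq
        obtain ⟨rfl, -⟩ := (Prod.mk.injEq ..).mp h2
        rcases hp' with rfl | hp'B
        · exact hkey a ha'
        · exact absurd hsub (hqnsub _ hp'B)
  refine ⟨r, hrcond, ⟨hAsub, fun a ha b _ => hlt_iff a b ha,
    fun a ha b hb => hIncomp_iff a ha b hb, Set.subset_insert _ _, le_refl _,
    Set.subset_union_left⟩, p, hpRA, q, hColq, Set.subset_insert _ _,
    Or.inr ⟨rfl, hp₀, Or.inr rfl⟩, Set.mem_insert _ _⟩
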